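/- Under Mallows' model with a single sample (n=1) and any dispersion 0<φ<1, fix an alternative a and for 0 ≤ s ≤ m−1 let T_s = {V ∈ ℒ(𝒜) : Borda_a(V) = s}. Then for any integers 0 ≤ s₂ < s₁ ≤ m−1: (i) for every W ∈ ℒ(𝒜) in which a is not ranked at the top (i.e., Borda_a(W) ≤ m−2), π_W(T_{s₂}) > φ^{s₁−s₂} · π_W(T_{s₁}); and (ii) for every W ∈ ℒ(𝒜) in which a is ranked at the top, π_W(T_{s₂}) = φ^{s₁−s₂} · π_W(T_{s₁}). -/

import Mathlib

namespace Voting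

open Finset

/-- A ranking over `m` alternatives: `V a` is the position of alternative `a`
(smaller position = more preferred), i.e. `a ≻_V b ↔ V a < V b`. -/
abbrev Ranking (m : ℕ) := Equiv.Perm (Fin m)

/-- Kendall-tau distance: the number of (unordered) pairs on which `V` and `W` disagree. -/
def KT {m : ℕ} (V W : Ranking m) : ℕ :=
  (Finset.univ.filter (fun p : Fin m × Fin m => V p.1 < V p.2 ∧ W p.2 < W p.1)).card

/-- Mallows' single-sample probability of `V` given ground truth `W` and dispersion `φ`. -/
noncomputable def mallows1 {m : ℕ} (φ : ℝ) (W V : Ranking m) : ℝ :=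
  φ ^ KT V W / ∑ U : Ranking m, φ ^ KT U W

/-- Mallows' model with `n` i.i.d. samples. -/
noncomputable def mallows {m : ℕ} (φ : ℝ) (n : ℕ) :
    Ranking m → (Fin n → Ranking m) → ℝ :=
  fun W P => ∏ i, mallows1 φ W (P i)

/-- `L_{a≻others}` : rankings in which `a` is ranked at the top. -/
def Ltop {m : ℕ} (a : Fin m) : Set (Ranking m) := {V | ∀ b, b ≠ a → V a < V b}

/-- `L_{others≻a}` : rankings in which `a` is ranked at the bottom. -/
def Lbot {m : ℕ} (a : Fin m) : Set (Ranking m) := {V | ∀ b, b ≠ a → V b < V a}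

/-- `w_P(b≻a)` : the weighted-majority-graph weight on the edge `b → a` of profile `P`. -/
def wpair {m n : ℕ} (P : Fin n → Ranking m) (b a : Fin m) : ℤ :=
  ((Finset.univ.filter (fun i => P i b < P i a)).card : ℤ) -
    ((Finset.univ.filter (fun i => P i a < P i b)).card : ℤ)

/-- `w_P(B≻a) = Σ_{b∈B} w_P(b≻a)`. -/
def wset {m n : ℕ} (P : Fin n → Ranking m) (B : Finset (Fin m)) (a : Fin m) : ℤ :=
  ∑ b ∈ B, wpair P b a

/-- The threshold test on the statistic `w_P(B≻a)` with threshold `K`/randomization `Γ`. -/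
noncomputable def wTest {m : ℕ} (n : ℕ) (B : Finset (Fin m)) (a : Fin m) (K Γ : ℝ) :
    (Fin n → Ranking m) → ℝ :=
  fun P =>
    if K < ((wset P B a : ℤ) : ℝ) then 1
    else if ((wset P B a : ℤ) : ℝ) < K then 0
    else Γ

/-- The Borda score of `a` in `V`: the number of alternatives ranked below `a`. -/
def Borda {m : ℕ} (a : Fin m) (V : Ranking m) : ℕ :=
  (Finset.univ.filter (fun b => V a < V b)).card


lemma borda_eq {m : ℕ} (a : Fin m) (V : Ranking m) : Borda a V = m - 1 - (V a : ℕ) := by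
  rw [Borda, ← Fin.card_Ioi (V a)]
  apply Finset.card_bij' (fun b _ => V b) (fun q _ => V.symm q) <;>
    intros <;> simp_all

lemma fin_lt_succ_iff {m : ℕ} {x y z : Fin m} (hxy : (x:ℕ)+1 = (y:ℕ))
    (hzx : z ≠ x) (hzy : z ≠ y) : x < z ↔ y < z := by
  have h1 : (z:ℕ) ≠ (x:ℕ) := fun h => hzx (Fin.ext h)
  have h2 : (z:ℕ) ≠ (y:ℕ) := fun h => hzy (Fin.ext h)
  constructor <;> intro h <;> rw [Fin.lt_def] at * <;> omega

lemma fin_lt_succ_iff' {m : ℕ} {x y z : Fin m} (hxy : (x:ℕ)+1 = (y:ℕ))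
    (hzx : z ≠ x) (hzy : z ≠ y) : z < y ↔ z < x := by
  have h1 : (z:ℕ) ≠ (x:ℕ) := fun h => hzx (Fin.ext h)
  have h2 : (z:ℕ) ≠ (y:ℕ) := fun h => hzy (Fin.ext h)
  constructor <;> intro h <;> rw [Fin.lt_def] at * <;> omega

lemma KT_swap_add_one {m : ℕ} (W V : Ranking m) (x y : Fin m) (hxy : (x:ℕ)+1 = (y:ℕ))
    (h : W (V.symm x) < W (V.symm y)) :
    KT (Equiv.swap x y * V) W = KT V W + 1 := by
  set u := V.symm x with hu
  set v := V.symm y with hv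
  have hxny : x ≠ y := fun h' => by simp [h'] at hxy
  have huv : u ≠ v := fun h' => hxny (by rw [← V.apply_symm_apply x, ← V.apply_symm_apply y, ← hu, ← hv, h'])
  have hVu : V u = x := V.apply_symm_apply x
  have hVv : V v = y := V.apply_symm_apply y
  have hxy' : x < y := by rw [Fin.lt_def]; omega
  have hyx : ¬ y < x := by rw [Fin.lt_def]; omega
  have hWvu : ¬ W v < W u := asymm h
  have key : (Finset.univ.filter (fun p : Fin m × Fin m =>
        (Equiv.swap x y * V) p.1 < (Equiv.swap x y * V) p.2 ∧ W p.2 < W p.1))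
      = insert (v, u)
          (Finset.univ.filter (fun p : Fin m × Fin m => V p.1 < V p.2 ∧ W p.2 < W p.1)) := by
    ext ⟨b, c⟩
    simp only [mem_filter, mem_insert, mem_univ, true_and,
      Prod.mk.injEq]
    simp only [Equiv.Perm.mul_apply]
    by_cases hbu : b = u <;> by_cases hbv : b = v <;>
      by_cases hcu : c = u <;> by_cases hcv : c = v <;>
      first
        | (exfalso; exact huv (hbu ▸ hbv ▸ rfl))
        | (exfalso; exact huv (hcu ▸ hcv ▸ rfl))
        | skip
    · -- b = u, c = u
      subst hbu; subst hcu
      simp [lt_irrefl, huv]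
    · -- b = u, c = v
      subst hbu; subst hcv
      rw [hVu, hVv, Equiv.swap_apply_left, Equiv.swap_apply_right]
      simp [huv, hyx, hWvu]
    · -- b = u, c other
      subst hbu
      have hcx : V c ≠ x := fun h' => hcu (by rw [hu, ← h', Equiv.symm_apply_apply])
      have hcy : V c ≠ y := fun h' => hcv (by rw [hv, ← h', Equiv.symm_apply_apply])
      rw [hVu, Equiv.swap_apply_left, Equiv.swap_apply_of_ne_of_ne hcx hcy]
      simp [huv, (fin_lt_succ_iff hxy hcx hcy)]
    · -- b = v, c = u
      subst hbv; subst hcu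
      rw [hVu, hVv, Equiv.swap_apply_left, Equiv.swap_apply_right]
      simp [hxy', h, hyx]
    · -- b = v, c = v
      subst hbv; subst hcv
      simp [lt_irrefl, huv.symm]
    · -- b = v, c other
      subst hbv
      have hcx : V c ≠ x := fun h' => hcu (by rw [hu, ← h', Equiv.symm_apply_apply])
      have hcy : V c ≠ y := fun h' => hcv (by rw [hv, ← h', Equiv.symm_apply_apply])
      rw [hVv, Equiv.swap_apply_right, Equiv.swap_apply_of_ne_of_ne hcx hcy]
      simp [hcu, (fin_lt_succ_iff hxy hcx hcy)]
    · -- b other, c = u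
      subst hcu
      have hbx : V b ≠ x := fun h' => hbu (by rw [hu, ← h', Equiv.symm_apply_apply])
      have hby : V b ≠ y := fun h' => hbv (by rw [hv, ← h', Equiv.symm_apply_apply])
      rw [hVu, Equiv.swap_apply_left, Equiv.swap_apply_of_ne_of_ne hbx hby]
      simp [hbv, (fin_lt_succ_iff' hxy hbx hby)]
    · -- b other, c = v
      subst hcv
      have hbx : V b ≠ x := fun h' => hbu (by rw [hu, ← h', Equiv.symm_apply_apply])
      have hby : V b ≠ y := fun h' => hbv (by rw [hv, ← h', Equiv.symm_apply_apply])
      rw [hVv, Equiv.swap_apply_right, Equiv.swap_apply_of_ne_of_ne hbx hby]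
      simp [hbv, (fin_lt_succ_iff' hxy hbx hby)]
    · -- both other
      have hbx : V b ≠ x := fun h' => hbu (by rw [hu, ← h', Equiv.symm_apply_apply])
      have hby : V b ≠ y := fun h' => hbv (by rw [hv, ← h', Equiv.symm_apply_apply])
      have hcx : V c ≠ x := fun h' => hcu (by rw [hu, ← h', Equiv.symm_apply_apply])
      have hcy : V c ≠ y := fun h' => hcv (by rw [hv, ← h', Equiv.symm_apply_apply])
      rw [Equiv.swap_apply_of_ne_of_ne hbx hby, Equiv.swap_apply_of_ne_of_ne hcx hcy]
      simp [hbv]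
  rw [KT, key, Finset.card_insert_of_notMem, KT]
  simp [hVu, hVv, hyx]

lemma KT_swap_sub_one {m : ℕ} (W V : Ranking m) (x y : Fin m) (hxy : (x:ℕ)+1 = (y:ℕ))
    (h : W (V.symm y) < W (V.symm x)) :
    KT V W = KT (Equiv.swap x y * V) W + 1 := by
  have hsymm : ∀ z, (Equiv.swap x y * V).symm z = V.symm (Equiv.swap x y z) := by
    intro z
    simp [Equiv.Perm.mul_def, Equiv.symm_trans_apply, Equiv.symm_swap]
  have hx : (Equiv.swap x y * V).symm x = V.symm y := by rw [hsymm, Equiv.swap_apply_left]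
  have hy : (Equiv.swap x y * V).symm y = V.symm x := by rw [hsymm, Equiv.swap_apply_right]
  have := KT_swap_add_one W (Equiv.swap x y * V) x y hxy (by rw [hx, hy]; exact h)
  rwa [← mul_assoc, Equiv.swap_mul_self, one_mul] at this

lemma borda_eq_iff {m : ℕ} (a : Fin m) (V : Ranking m) (t : ℕ) (ht : t ≤ m - 1) :
    Borda a V = t ↔ (V a : ℕ) = m - 1 - t := by
  rw [borda_eq]
  have := (V a).isLt
  omega

lemma sum_T {m : ℕ} (hm : 2 ≤ m) (a : Fin m) {s : ℕ} (hs : s + 1 ≤ m - 1)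
    (f : Ranking m → ℝ) :
    ∑ V ∈ Finset.univ.filter (fun V : Ranking m => Borda a V = s), f V
      = ∑ V ∈ Finset.univ.filter (fun V : Ranking m => Borda a V = s + 1),
          f (Equiv.swap (⟨m - 2 - s, by omega⟩ : Fin m) (⟨m - 1 - s, by omega⟩ : Fin m) * V) := by
  set x : Fin m := ⟨m - 2 - s, by omega⟩
  set y : Fin m := ⟨m - 1 - s, by omega⟩
  apply Finset.sum_nbij' (i := fun V => Equiv.swap x y * V) (j := fun V => Equiv.swap x y * V)
  · intro V hV
    simp only [mem_filter, mem_univ, true_and] at hV ⊢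
    rw [borda_eq_iff a _ s (by omega)] at hV
    rw [borda_eq_iff a _ (s+1) (by omega)]
    have : V a = y := Fin.ext (by show _ = m - 1 - s; omega)
    simp only [Equiv.Perm.mul_apply, this, Equiv.swap_apply_right]
    show m - 2 - s = _; omega
  · intro V hV
    simp only [mem_filter, mem_univ, true_and] at hV ⊢
    rw [borda_eq_iff a _ (s+1) (by omega)] at hV
    rw [borda_eq_iff a _ s (by omega)]
    have : V a = x := Fin.ext (by show _ = m - 2 - s; omega)
    simp only [Equiv.Perm.mul_apply, this, Equiv.swap_apply_left]
    rfl
  · intro V _; rw [← mul_assoc, Equiv.swap_mul_self, one_mul]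
  · intro V _; rw [← mul_assoc, Equiv.swap_mul_self, one_mul]
  · intro V _; rw [← mul_assoc, Equiv.swap_mul_self, one_mul]

lemma step_eq {m : ℕ} (hm : 2 ≤ m) (a : Fin m) (W : Ranking m) {s : ℕ} (hs : s + 1 ≤ m - 1)
    (φ : ℝ) (hW : ∀ b, b ≠ a → W a < W b) :
    ∑ V ∈ Finset.univ.filter (fun V : Ranking m => Borda a V = s), φ ^ KT V W
      = φ * ∑ V ∈ Finset.univ.filter (fun V : Ranking m => Borda a V = s + 1), φ ^ KT V W := by
  rw [sum_T hm a hs, Finset.mul_sum]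
  apply Finset.sum_congr rfl
  intro V hV
  simp only [mem_filter, mem_univ, true_and] at hV
  set x : Fin m := ⟨m - 2 - s, by omega⟩ with hxdef
  set y : Fin m := ⟨m - 1 - s, by omega⟩ with hydef
  rw [borda_eq_iff a _ (s+1) (by omega)] at hV
  have hVa : V a = x := Fin.ext (by show _ = m - 2 - s; omega)
  have hsx : V.symm x = a := by rw [Equiv.symm_apply_eq, hVa]
  have hv : V.symm y ≠ a := by
    intro h
    have : V a = y := by rw [← h, Equiv.apply_symm_apply]
    rw [hVa] at this
    have : (m : ℕ) - 2 - s = m - 1 - s := congrArg Fin.val this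
    omega
  have hlt : W (V.symm x) < W (V.symm y) := hsx ▸ hW _ hv
  rw [KT_swap_add_one W V x y (by show (m-2-s)+1 = m-1-s; omega) hlt, pow_succ]
  ring

lemma step_lt {m : ℕ} (hm : 2 ≤ m) (a : Fin m) (W : Ranking m) {s : ℕ} (hs : s + 1 ≤ m - 1)
    {φ : ℝ} (hφ0 : 0 < φ) (hφ1 : φ < 1) (hW : ∃ b, b ≠ a ∧ W b < W a) :
    φ * ∑ V ∈ Finset.univ.filter (fun V : Ranking m => Borda a V = s + 1), φ ^ KT V W
      < ∑ V ∈ Finset.univ.filter (fun V : Ranking m => Borda a V = s), φ ^ KT V W := by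
  rw [sum_T hm a hs, Finset.mul_sum]
  set x : Fin m := ⟨m - 2 - s, by omega⟩ with hxdef
  set y : Fin m := ⟨m - 1 - s, by omega⟩ with hydef
  have hxy : (x:ℕ) + 1 = (y:ℕ) := by show (m-2-s)+1 = m-1-s; omega
  apply Finset.sum_lt_sum
  · intro V hV
    simp only [mem_filter, mem_univ, true_and] at hV
    rw [borda_eq_iff a _ (s+1) (by omega)] at hV
    have hVa : V a = x := Fin.ext (by show _ = m - 2 - s; omega)
    have hsx : V.symm x = a := by rw [Equiv.symm_apply_eq, hVa]
    have hv : V.symm y ≠ a := by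
      intro h
      have : V a = y := by rw [← h, Equiv.apply_symm_apply]
      rw [hVa] at this
      have : (m : ℕ) - 2 - s = m - 1 - s := congrArg Fin.val this
      omega
    rcases lt_or_gt_of_ne (a := W (V.symm y)) (b := W (V.symm x))
      (by rw [hsx]; exact fun h => hv (W.injective (hsx ▸ h))) with h | h
    · -- W v < W a : strict per-term, but ≤ suffices here
      rw [KT_swap_sub_one W V x y hxy h, pow_succ]
      have hp : 0 < φ ^ KT (Equiv.swap x y * V) W := pow_pos hφ0 _
      have h2 : φ * φ < 1 := by nlinarith
      calc φ * (φ ^ KT (Equiv.swap x y * V) W * φ)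
          = φ ^ KT (Equiv.swap x y * V) W * (φ * φ) := by ring
        _ ≤ φ ^ KT (Equiv.swap x y * V) W * 1 := by
            exact (mul_le_mul_of_nonneg_left h2.le hp.le)
        _ = _ := mul_one _
    · rw [KT_swap_add_one W V x y hxy h, pow_succ]
      exact le_of_eq (by ring)
  · obtain ⟨b, hba, hb⟩ := hW
    set V₁ : Ranking m := Equiv.swap a x with hV1
    set z : Fin m := V₁ b with hz
    have hzx : z ≠ x := by
      intro h
      exact hba (V₁.injective (h.trans (Equiv.swap_apply_left a x).symm))
    have hxyne : x ≠ y := fun h => by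
      have : (m:ℕ) - 2 - s = m - 1 - s := congrArg Fin.val h
      omega
    set V₀ : Ranking m := Equiv.swap z y * V₁ with hV0
    have hV₀a : V₀ a = x := by
      rw [hV0, Equiv.Perm.mul_apply]
      show Equiv.swap z y (V₁ a) = x
      rw [hV1]
      rw [Equiv.swap_apply_left a x, Equiv.swap_apply_of_ne_of_ne (Ne.symm hzx) hxyne]
    have hV₀b : V₀ b = y := by
      rw [hV0, Equiv.Perm.mul_apply, ← hz, Equiv.swap_apply_left]
    refine ⟨V₀, ?_, ?_⟩
    · simp only [mem_filter, mem_univ, true_and]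
      rw [borda_eq_iff a _ (s+1) (by omega), hV₀a]
      show (m:ℕ) - 2 - s = m - 1 - (s+1); omega
    · have hsymx : V₀.symm x = a := by rw [Equiv.symm_apply_eq, hV₀a]
      have hsymy : V₀.symm y = b := by rw [Equiv.symm_apply_eq, hV₀b]
      have h : W (V₀.symm y) < W (V₀.symm x) := by rw [hsymx, hsymy]; exact hb
      rw [KT_swap_sub_one W V₀ x y hxy h, pow_succ]
      have hp : 0 < φ ^ KT (Equiv.swap x y * V₀) W := pow_pos hφ0 _
      have h2 : φ * φ < 1 := by nlinarith
      calc φ * (φ ^ KT (Equiv.swap x y * V₀) W * φ)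
          = φ ^ KT (Equiv.swap x y * V₀) W * (φ * φ) := by ring
        _ < φ ^ KT (Equiv.swap x y * V₀) W * 1 := by
            exact (mul_lt_mul_of_pos_left h2 hp)
        _ = _ := mul_one _

lemma Ssum_pos {m : ℕ} (hm : 1 ≤ m) (a : Fin m) (W : Ranking m) {φ : ℝ} (hφ0 : 0 < φ)
    {t : ℕ} (ht : t ≤ m - 1) :
    0 < ∑ V ∈ Finset.univ.filter (fun V : Ranking m => Borda a V = t), φ ^ KT V W := by
  apply Finset.sum_pos (fun V _ => pow_pos hφ0 _)
  refine ⟨Equiv.swap a ⟨m - 1 - t, by omega⟩, ?_⟩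
  simp only [mem_filter, mem_univ, true_and]
  rw [borda_eq_iff a _ t ht, Equiv.swap_apply_left]

lemma chain_eq {m : ℕ} (hm : 2 ≤ m) (a : Fin m) (W : Ranking m) (φ : ℝ)
    (hW : ∀ b, b ≠ a → W a < W b) :
    ∀ d s, s + d ≤ m - 1 →
      ∑ V ∈ Finset.univ.filter (fun V : Ranking m => Borda a V = s), φ ^ KT V W
        = φ ^ d * ∑ V ∈ Finset.univ.filter (fun V : Ranking m => Borda a V = s + d),
            φ ^ KT V W := by
  intro d
  induction d with
  | zero => intro s _; simp
  | succ d ih =>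
    intro s hsd
    have h1 := ih s (by omega)
    have h2 := step_eq hm a W (s := s + d) (by omega) φ hW
    rw [h1, h2, pow_succ, show s + (d+1) = s + d + 1 from rfl]
    ring

lemma chain_lt {m : ℕ} (hm : 2 ≤ m) (a : Fin m) (W : Ranking m) {φ : ℝ}
    (hφ0 : 0 < φ) (hφ1 : φ < 1) (hW : ∃ b, b ≠ a ∧ W b < W a) :
    ∀ d s, 1 ≤ d → s + d ≤ m - 1 →
      φ ^ d * ∑ V ∈ Finset.univ.filter (fun V : Ranking m => Borda a V = s + d), φ ^ KT V W
        < ∑ V ∈ Finset.univ.filter (fun V : Ranking m => Borda a V = s), φ ^ KT V W := by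
  intro d
  induction d with
  | zero => intro s h1 _; omega
  | succ d ih =>
    intro s _ hsd
    rcases Nat.eq_zero_or_pos d with hd | hd
    · subst hd
      rw [pow_one]
      exact step_lt hm a W (by omega) hφ0 hφ1 hW
    · have hstep := step_lt hm a W (s := s + d) (by omega) hφ0 hφ1 hW
      have hih := ih s (by omega) (by omega)
      calc φ ^ (d+1) * ∑ V ∈ Finset.univ.filter
              (fun V : Ranking m => Borda a V = s + (d+1)), φ ^ KT V W
          = φ ^ d * (φ * ∑ V ∈ Finset.univ.filter
              (fun V : Ranking m => Borda a V = s + d + 1), φ ^ KT V W) := by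
            rw [show s + (d+1) = s + d + 1 from rfl, pow_succ]; ring
        _ < φ ^ d * ∑ V ∈ Finset.univ.filter
              (fun V : Ranking m => Borda a V = s + d), φ ^ KT V W :=
            mul_lt_mul_of_pos_left hstep (pow_pos hφ0 d)
        _ < _ := hih

/-- **Cost-effectiveness of Borda levels.** With
`T_s = {V : Borda_a(V) = s}` and `s₂ < s₁ ≤ m−1` :
(i) for every `W` in which `a` is not ranked at the top,
`π_W(T_{s₂}) > φ^{s₁−s₂}·π_W(T_{s₁})`;
(ii) for every `W` in which `a` is ranked at the top,
`π_W(T_{s₂}) = φ^{s₁−s₂}·π_W(T_{s₁})`. -/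
theorem stmt18 (m : ℕ) (hm : 2 ≤ m) (φ : ℝ) (hφ0 : 0 < φ) (hφ1 : φ < 1)
    (a : Fin m) (s₁ s₂ : ℕ) (hs : s₂ < s₁) (hs₁ : s₁ ≤ m - 1) :
    (∀ W : Ranking m, W ∉ Ltop a →
      φ ^ (s₁ - s₂) *
          ∑ V ∈ Finset.univ.filter (fun V : Ranking m => Borda a V = s₁),
            mallows1 φ W V <
        ∑ V ∈ Finset.univ.filter (fun V : Ranking m => Borda a V = s₂),
          mallows1 φ W V) ∧
    (∀ W : Ranking m, W ∈ Ltop a →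
      ∑ V ∈ Finset.univ.filter (fun V : Ranking m => Borda a V = s₂),
          mallows1 φ W V =
        φ ^ (s₁ - s₂) *
          ∑ V ∈ Finset.univ.filter (fun V : Ranking m => Borda a V = s₁),
            mallows1 φ W V) := by
  have hsum : ∀ (W : Ranking m) (t : ℕ),
      ∑ V ∈ Finset.univ.filter (fun V : Ranking m => Borda a V = t), mallows1 φ W V
        = (∑ V ∈ Finset.univ.filter (fun V : Ranking m => Borda a V = t), φ ^ KT V W)
            / (∑ U : Ranking m, φ ^ KT U W) := by
    intro W t
    simp only [mallows1]
    rw [Finset.sum_div]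
  have hZ : ∀ W : Ranking m, 0 < ∑ U : Ranking m, φ ^ KT U W := by
    intro W
    exact Finset.sum_pos (fun U _ => pow_pos hφ0 _) ⟨1, Finset.mem_univ 1⟩
  have hdd : s₂ + (s₁ - s₂) = s₁ := by omega
  constructor
  · intro W hW
    simp only [Ltop, Set.mem_setOf_eq, not_forall] at hW
    obtain ⟨b, hba, hb⟩ := hW
    have hba' : b ≠ a := hba
    have hb' : W b < W a :=
      lt_of_le_of_ne (not_lt.mp hb) (fun h => hba' (W.injective h))
    have key := chain_lt hm a W hφ0 hφ1 ⟨b, hba', hb'⟩ (s₁ - s₂) s₂ (by omega) (by omega)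
    rw [hdd] at key
    rw [hsum W s₁, hsum W s₂, ← mul_div_assoc]
    exact div_lt_div_of_pos_right key (hZ W)
  · intro W hW
    have hW' : ∀ b, b ≠ a → W a < W b := hW
    have key := chain_eq hm a W φ hW' (s₁ - s₂) s₂ (by omega)
    rw [hdd] at key
    rw [hsum W s₁, hsum W s₂, ← mul_div_assoc, key]



end Voting
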